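/- arXiv:2010.11748 — 5 statements merged into one kernel-verified Lean document; each statement's English description precedes it below -/
import Mathlib

section
/- (Theorem 1, forward direction.) Let c ∈ (0, 1/2), K ≥ 2, and let φ : ℝ → ℝ be a classification-calibrated margin loss. Then for every class-posterior vector η ∈ ℝ^K and every g* ∈ ℝ^K that minimizes W(·; η) over ℝ^K, the decision rule induced by g* attains the minimal conditional zero-one-c risk min(c, 1 − max_y η_y) at η; in particular, it coincides with Chow's rule at every η with max_y η_y ≠ 1 − c. -/
open Classical

/-- The maximum of a function on `Fin K` (for `K > 0`). -/
noncomputable def vmax {K : ℕ} (hK : 0 < K) (f : Fin K → ℝ) : ℝ :=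
  Finset.univ.sup' ⟨⟨0, hK⟩, Finset.mem_univ _⟩ f

/-- The conditional zero-one-c risk of a decision (`none` = rejection ®,
`some y` = predicting class `y`) at a class-posterior vector `η`. -/
def drisk {K : ℕ} (c : ℝ) (η : Fin K → ℝ) : Option (Fin K) → ℝ
  | none => c
  | some y => 1 - η y

/-- The cost-sensitive surrogate loss `L_CS^φ(g, y) = c·φ(g_y) + (1−c)·∑_{y'≠y} φ(−g_{y'})`. -/
noncomputable def LCS {K : ℕ} (φ : ℝ → ℝ) (c : ℝ) (g : Fin K → ℝ) (y : Fin K) : ℝ :=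
  c * φ (g y) + (1 - c) * ∑ y' ∈ Finset.univ.erase y, φ (-(g y'))

/-- The pointwise conditional surrogate risk `W(g; η) = ∑_y η_y · L_CS^φ(g, y)`. -/
noncomputable def Wrisk {K : ℕ} (φ : ℝ → ℝ) (c : ℝ) (g η : Fin K → ℝ) : ℝ :=
  ∑ y, η y * LCS φ c g y

/-- The decision rule induced by a score vector `g`: reject (`none`) if
`max_y g_y ≤ 0` or if two distinct coordinates of `g` are strictly positive,
otherwise output the unique class `y` with `g_y > 0`. -/
noncomputable def decRule {K : ℕ} (g : Fin K → ℝ) : Option (Fin K) :=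
  if h : ∃! y, 0 < g y then some h.choose else none

/-- A margin loss `φ` is classification-calibrated if for every `η ∈ [0,1]` with
`η ≠ 1/2`, the infimum of the conditional `φ`-risk over `v` with `v·(2η−1) ≤ 0` is
strictly greater than the unrestricted infimum. -/
def ClassificationCalibrated (φ : ℝ → ℝ) : Prop :=
  ∀ η : ℝ, 0 ≤ η → η ≤ 1 → η ≠ 1/2 →
    sInf {r : ℝ | ∃ v : ℝ, v * (2 * η - 1) ≤ 0 ∧ r = η * φ v + (1 - η) * φ (-v)} >
    sInf {r : ℝ | ∃ v : ℝ, r = η * φ v + (1 - η) * φ (-v)}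

lemma Wrisk_sep {K : ℕ} (φ : ℝ → ℝ) (c : ℝ) (g η : Fin K → ℝ) (hη1 : ∑ y, η y = 1) :
    Wrisk φ c g η = ∑ y, (c * η y * φ (g y) + (1 - c) * (1 - η y) * φ (-(g y))) := by
  unfold Wrisk LCS
  have h1 : ∀ y : Fin K, ∑ y' ∈ Finset.univ.erase y, φ (-(g y')) =
      (∑ y', φ (-(g y'))) - φ (-(g y)) := fun y =>
    Finset.sum_erase_eq_sub (Finset.mem_univ y)
  set S := ∑ y' : Fin K, φ (-(g y')) with hS
  have lhs : ∑ y, η y * (c * φ (g y) + (1 - c) * ∑ y' ∈ Finset.univ.erase y, φ (-(g y'))) =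
      (∑ y, (c * η y * φ (g y) - (1 - c) * η y * φ (-(g y)))) + ((1 - c) * S) * ∑ y, η y := by
    rw [Finset.mul_sum, ← Finset.sum_add_distrib]
    refine Finset.sum_congr rfl fun y _ => ?_
    rw [h1 y]; ring
  have rhs : ∑ y, (c * η y * φ (g y) + (1 - c) * (1 - η y) * φ (-(g y))) =
      (∑ y, (c * η y * φ (g y) - (1 - c) * η y * φ (-(g y)))) + (1 - c) * S := by
    rw [hS, Finset.mul_sum, ← Finset.sum_add_distrib]
    refine Finset.sum_congr rfl fun y _ => ?_
    ring
  rw [lhs, rhs, hη1, mul_one]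

lemma coord_min {K : ℕ} (φ : ℝ → ℝ) (c : ℝ) (η gstar : Fin K → ℝ) (hη1 : ∑ y, η y = 1)
    (hmin : ∀ g : Fin K → ℝ, Wrisk φ c gstar η ≤ Wrisk φ c g η) (y : Fin K) (v : ℝ) :
    c * η y * φ (gstar y) + (1 - c) * (1 - η y) * φ (-(gstar y)) ≤
      c * η y * φ v + (1 - c) * (1 - η y) * φ (-v) := by
  have h := hmin (Function.update gstar y v)
  rw [Wrisk_sep φ c gstar η hη1, Wrisk_sep φ c _ η hη1] at h
  have split : ∀ f : Fin K → ℝ,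
      ∑ z, (c * η z * φ (f z) + (1 - c) * (1 - η z) * φ (-(f z))) =
      (∑ z ∈ Finset.univ.erase y, (c * η z * φ (f z) + (1 - c) * (1 - η z) * φ (-(f z)))) +
        (c * η y * φ (f y) + (1 - c) * (1 - η y) * φ (-(f y))) := by
    intro f
    rw [Finset.sum_erase_add Finset.univ _ (Finset.mem_univ y)]
  rw [split gstar, split (Function.update gstar y v)] at h
  have heq : ∑ z ∈ Finset.univ.erase y,
      (c * η z * φ (Function.update gstar y v z) + (1 - c) * (1 - η z) * φ (-(Function.update gstar y v z))) =
      ∑ z ∈ Finset.univ.erase y, (c * η z * φ (gstar z) + (1 - c) * (1 - η z) * φ (-(gstar z))) := by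
    refine Finset.sum_congr rfl fun z hz => ?_
    rw [Function.update_of_ne (Finset.ne_of_mem_erase hz)]
  rw [heq, Function.update_self] at h
  linarith

lemma sign_lemma (c : ℝ) (hc0 : 0 < c) (hc : c < 1/2) (φ : ℝ → ℝ)
    (hφ : ∀ η : ℝ, 0 ≤ η → η ≤ 1 → η ≠ 1/2 →
      sInf {r : ℝ | ∃ v : ℝ, v * (2 * η - 1) ≤ 0 ∧ r = η * φ v + (1 - η) * φ (-v)} >
      sInf {r : ℝ | ∃ v : ℝ, r = η * φ v + (1 - η) * φ (-v)})
    (a : ℝ) (ha0 : 0 ≤ a) (ha1 : a ≤ 1) (t : ℝ)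
    (hmin : ∀ v, c * a * φ t + (1 - c) * (1 - a) * φ (-t) ≤ c * a * φ v + (1 - c) * (1 - a) * φ (-v))
    (hne : a ≠ 1 - c) : 0 < t * (a - (1 - c)) := by
  have hZ : 0 < c * a + (1 - c) * (1 - a) := by nlinarith
  set Z := c * a + (1 - c) * (1 - a) with hZdef
  set p := c * a / Z with hpdef
  have hp0 : 0 ≤ p := div_nonneg (by nlinarith) hZ.le
  have hp1 : p ≤ 1 := by rw [hpdef, div_le_one hZ]; nlinarith
  have hpne : p ≠ 1 / 2 := by
    intro h
    rw [hpdef, div_eq_iff hZ.ne'] at h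
    exact hne (by nlinarith [h, hZdef])
  have hcomb : ∀ x y : ℝ, p * x + (1 - p) * y = (c * a * x + (1 - c) * (1 - a) * y) / Z := by
    intro x y
    rw [hpdef, hZdef]
    have hZ' : c * a + (1 - c) * (1 - a) ≠ 0 := hZ.ne'
    field_simp
    try ring
  have hmin' : ∀ v, p * φ t + (1 - p) * φ (-t) ≤ p * φ v + (1 - p) * φ (-v) := by
    intro v
    rw [hcomb, hcomb]
    exact div_le_div_of_nonneg_right (hmin v) hZ.le
  by_contra hcon
  push_neg at hcon
  have key := hφ p hp0 hp1 hpne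
  set m := p * φ t + (1 - p) * φ (-t) with hm
  have hub : m ≤ sInf {r : ℝ | ∃ v : ℝ, r = p * φ v + (1 - p) * φ (-v)} := by
    have hne' : {r : ℝ | ∃ v : ℝ, r = p * φ v + (1 - p) * φ (-v)}.Nonempty := ⟨m, t, hm⟩
    apply le_csInf hne'
    rintro b ⟨v, rfl⟩
    exact hmin' v
  have h2p : 2 * p - 1 = (a - (1 - c)) / Z := by
    rw [hpdef, hZdef]
    have hZ' : c * a + (1 - c) * (1 - a) ≠ 0 := hZ.ne'
    field_simp
    ring
  have hres : t * (2 * p - 1) ≤ 0 := by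
    rw [h2p, mul_div_assoc']
    exact div_nonpos_of_nonpos_of_nonneg hcon hZ.le
  have hlow : sInf {r : ℝ | ∃ v : ℝ, v * (2 * p - 1) ≤ 0 ∧ r = p * φ v + (1 - p) * φ (-v)} ≤ m := by
    have hbdd : BddBelow {r : ℝ | ∃ v : ℝ, v * (2 * p - 1) ≤ 0 ∧ r = p * φ v + (1 - p) * φ (-v)} :=
      ⟨m, fun b hb => by obtain ⟨v, -, rfl⟩ := hb; exact hmin' v⟩
    exact csInf_le hbdd ⟨t, hres, rfl⟩
  linarith

lemma decRule_eq_none {K : ℕ} (g : Fin K → ℝ) (h : ∀ y, g y ≤ 0) : decRule g = none := by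
  unfold decRule
  rw [dif_neg]
  rintro ⟨y, hy, -⟩
  exact absurd hy (not_lt.mpr (h y))

lemma decRule_eq_some {K : ℕ} (g : Fin K → ℝ) (y0 : Fin K) (h0 : 0 < g y0)
    (h1 : ∀ y, y ≠ y0 → g y < 0) : decRule g = some y0 := by
  have hu : ∃! y, 0 < g y :=
    ⟨y0, h0, fun y hy => by_contra fun hne => absurd hy (not_lt.mpr (h1 y hne).le)⟩
  unfold decRule
  rw [dif_pos hu]
  exact congrArg some (hu.choose_spec.2 y0 h0).symm

/-- (Theorem 1, forward direction.) If `φ` is classification-calibrated, then for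
every class-posterior vector `η` and every minimizer `g*` of the pointwise conditional
surrogate risk `W(·; η)`, the decision rule induced by `g*` attains the minimal
conditional zero-one-c risk `min c (1 - max_y η_y)` at `η`; in particular it
coincides with Chow's rule at every `η` with `max_y η_y ≠ 1 - c`. -/
theorem stmt4 (c : ℝ) (hc0 : 0 < c) (hc : c < 1/2) (K : ℕ) (hK : 2 ≤ K)
    (φ : ℝ → ℝ) (hφ : ClassificationCalibrated φ)
    (η : Fin K → ℝ) (hη0 : ∀ y, 0 ≤ η y) (hη1 : ∑ y, η y = 1)
    (gstar : Fin K → ℝ) (hmin : ∀ g : Fin K → ℝ, Wrisk φ c gstar η ≤ Wrisk φ c g η) :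
    drisk c η (decRule gstar) = min c (1 - vmax (by omega) η) ∧
    (vmax (by omega) η ≠ 1 - c →
      ((vmax (by omega) η ≤ 1 - c → decRule gstar = none) ∧
       (1 - c < vmax (by omega) η →
          ∃ y : Fin K, decRule gstar = some y ∧ η y = vmax (by omega) η))) := by
  have hKpos : 0 < K := by omega
  have hle1 : ∀ y, η y ≤ 1 := by
    intro y
    rw [← hη1]
    exact Finset.single_le_sum (fun i _ => hη0 i) (Finset.mem_univ y)
  have hsign : ∀ y, η y ≠ 1 - c → 0 < gstar y * (η y - (1 - c)) := fun y hy =>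
    sign_lemma c hc0 hc φ hφ (η y) (hη0 y) (hle1 y) (gstar y)
      (fun v => coord_min φ c η gstar hη1 hmin y v) hy
  have hneg : ∀ y, η y < 1 - c → gstar y < 0 := by
    intro y hy
    have h := hsign y (ne_of_lt hy)
    nlinarith
  have hpos : ∀ y, 1 - c < η y → 0 < gstar y := by
    intro y hy
    have h := hsign y (ne_of_gt hy)
    nlinarith
  obtain ⟨y0, -, hy0⟩ :=
    Finset.exists_mem_eq_sup' (⟨⟨0, hKpos⟩, Finset.mem_univ _⟩ : (Finset.univ : Finset (Fin K)).Nonempty) η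
  have hM : vmax hKpos η = η y0 := hy0
  have hMle : ∀ y, η y ≤ η y0 := by
    intro y
    rw [← hM]
    exact Finset.le_sup' η (Finset.mem_univ y)
  have hother : ∀ y, y ≠ y0 → η y ≤ 1 - η y0 := by
    intro y hy
    have h1 := Finset.add_sum_erase Finset.univ η (Finset.mem_univ y0)
    have h2 : η y ≤ ∑ z ∈ Finset.univ.erase y0, η z :=
      Finset.single_le_sum (fun i _ => hη0 i) (Finset.mem_erase.mpr ⟨hy, Finset.mem_univ y⟩)
    rw [hη1] at h1
    linarith
  show drisk c η (decRule gstar) = min c (1 - vmax hKpos η) ∧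
    (vmax hKpos η ≠ 1 - c →
      ((vmax hKpos η ≤ 1 - c → decRule gstar = none) ∧
       (1 - c < vmax hKpos η →
          ∃ y : Fin K, decRule gstar = some y ∧ η y = vmax hKpos η)))
  rw [hM]
  rcases lt_trichotomy (η y0) (1 - c) with hA | hB | hC
  · -- all coordinates below threshold: reject
    have hall : ∀ y, gstar y < 0 := fun y => hneg y (lt_of_le_of_lt (hMle y) hA)
    have hdec : decRule gstar = none := decRule_eq_none gstar fun y => (hall y).le
    rw [hdec]
    refine ⟨?_, fun _ => ⟨fun _ => rfl, fun hgt => absurd hgt (not_lt.mpr hA.le)⟩⟩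
    show c = min c (1 - η y0)
    rw [min_eq_left (by linarith)]
  · -- boundary case
    have hoth : ∀ y, y ≠ y0 → gstar y < 0 := by
      intro y hy
      apply hneg
      have := hother y hy
      linarith
    have hfst : drisk c η (decRule gstar) = c := by
      rcases lt_or_ge 0 (gstar y0) with h0 | h0
      · rw [decRule_eq_some gstar y0 h0 hoth]
        show 1 - η y0 = c
        linarith
      · rw [decRule_eq_none gstar fun y => ?_]
        · rfl
        · rcases eq_or_ne y y0 with rfl | hy
          · exact h0
          · exact (hoth y hy).le
    refine ⟨?_, fun hne => absurd hB hne⟩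
    rw [hfst, min_eq_left (by linarith)]
  · -- unique argmax above threshold: predict y0
    have h0 : 0 < gstar y0 := hpos y0 hC
    have hoth : ∀ y, y ≠ y0 → gstar y < 0 := by
      intro y hy
      apply hneg
      have := hother y hy
      linarith
    have hdec : decRule gstar = some y0 := decRule_eq_some gstar y0 h0 hoth
    rw [hdec]
    refine ⟨?_, fun _ => ⟨fun hle => absurd hle (not_le.mpr hC), fun _ => ⟨y0, rfl, rfl⟩⟩⟩
    show 1 - η y0 = min c (1 - η y0)
    rw [min_eq_right (by linarith)]
end

section
/- Let c ∈ (0, 1/2), K ≥ 2, and let φ : ℝ → ℝ be a classification-calibrated margin loss. For every class-posterior vector η ∈ ℝ^K and every g* ∈ ℝ^K minimizing W(·; η) over ℝ^K, at most one coordinate of g* is strictly positive; in particular, the conflict condition (existence of distinct classes y ≠ y' with g*_y > 0 and g*_{y'} > 0) cannot occur at a conditional minimizer. -/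
open Classical

lemma Wdecomp (φ : ℝ → ℝ) (c : ℝ) {K : ℕ} (g η : Fin K → ℝ) (hη1 : ∑ y, η y = 1) :
    Wrisk φ c g η = ∑ y, (c * η y * φ (g y) + (1 - c) * (1 - η y) * φ (-(g y))) := by
  unfold Wrisk LCS
  have h1 : ∀ y : Fin K, ∑ y' ∈ Finset.univ.erase y, φ (-(g y')) =
      (∑ y', φ (-(g y'))) - φ (-(g y)) := by
    intro y; rw [Finset.sum_erase_eq_sub (Finset.mem_univ y)]
  simp_rw [h1]
  have h2 : ∀ y : Fin K, η y * (c * φ (g y) + (1 - c) * ((∑ y', φ (-(g y'))) - φ (-(g y))))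
      = (c * η y * φ (g y) - (1 - c) * η y * φ (-(g y)))
        + ((1 - c) * (∑ y', φ (-(g y')))) * η y := by intro y; ring
  simp_rw [h2]
  rw [Finset.sum_add_distrib, ← Finset.mul_sum, hη1, mul_one, Finset.mul_sum,
    ← Finset.sum_add_distrib]
  exact Finset.sum_congr rfl (fun y _ => by ring)

/-- If `v > 0` minimizes `a·φ(·) + b·φ(−·)` with `a ≥ 0`, `b > 0`, `a < b`, and `φ`
is classification-calibrated, we get a contradiction. -/
lemma coord_key (φ : ℝ → ℝ) (hφ : ClassificationCalibrated φ) (a b v : ℝ)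
    (ha : 0 ≤ a) (hb : 0 < b) (hab : a < b) (hv : 0 < v)
    (hminv : ∀ w : ℝ, a * φ v + b * φ (-v) ≤ a * φ w + b * φ (-w)) : False := by
  set A := a + b with hA
  have hA0 : 0 < A := by positivity
  set p := a / A with hp
  have hp0 : 0 ≤ p := div_nonneg ha hA0.le
  have hp1 : p ≤ 1 := by
    rw [hp, div_le_one hA0]; linarith
  have hplt : p < 1/2 := by
    rw [hp, div_lt_iff₀ hA0]; linarith
  have hpne : p ≠ 1/2 := ne_of_lt hplt
  have hcal := hφ p hp0 hp1 hpne
  set S : Set ℝ := {r : ℝ | ∃ w : ℝ, r = p * φ w + (1 - p) * φ (-w)} with hS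
  set S' : Set ℝ := {r : ℝ | ∃ w : ℝ, w * (2 * p - 1) ≤ 0 ∧ r = p * φ w + (1 - p) * φ (-w)}
    with hS'
  have hsub : S' ⊆ S := fun r ⟨w, _, hw⟩ => ⟨w, hw⟩
  set r : ℝ := p * φ v + (1 - p) * φ (-v) with hr
  have hrS' : r ∈ S' := ⟨v, by nlinarith, rfl⟩
  have hex : ∃ s ∈ S, s < r := by
    by_cases hbd : BddBelow S
    · have hbd' : BddBelow S' := hbd.mono hsub
      have h1 : sInf S' ≤ r := csInf_le hbd' hrS'
      have h2 : sInf S < r := lt_of_lt_of_le hcal h1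
      exact exists_lt_of_csInf_lt ⟨r, hsub hrS'⟩ h2
    · rw [not_bddBelow_iff] at hbd
      exact hbd r
  obtain ⟨s, ⟨w, hws⟩, hsr⟩ := hex
  have key : a * φ w + b * φ (-w) < a * φ v + b * φ (-v) := by
    have hmul := mul_lt_mul_of_pos_left hsr hA0
    have h1p : 1 - p = b / A := by
      rw [hp, eq_div_iff hA0.ne', sub_mul, div_mul_cancel₀ _ hA0.ne', hA]; ring
    have e0 : ∀ x y : ℝ, A * (p * x + (1 - p) * y) = a * x + b * y := by
      intro x y
      rw [hp, h1p, mul_add, ← mul_assoc, ← mul_assoc, mul_div_cancel₀ _ hA0.ne',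
        mul_div_cancel₀ _ hA0.ne']
    have e1 := e0 (φ w) (φ (-w))
    have e2 := e0 (φ v) (φ (-v))
    rw [hws] at hmul; rw [hr] at hmul
    linarith
  exact absurd (hminv w) (not_le.mpr key)

/-- If `φ` is classification-calibrated, then every minimizer `g*` of the pointwise
conditional surrogate risk `W(·; η)` has at most one strictly positive coordinate;
in particular, the conflict condition cannot occur at a conditional minimizer. -/
theorem stmt6 (c : ℝ) (hc0 : 0 < c) (hc : c < 1/2) (K : ℕ) (hK : 2 ≤ K)
    (φ : ℝ → ℝ) (hφ : ClassificationCalibrated φ)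
    (η : Fin K → ℝ) (hη0 : ∀ y, 0 ≤ η y) (hη1 : ∑ y, η y = 1)
    (gstar : Fin K → ℝ) (hmin : ∀ g : Fin K → ℝ, Wrisk φ c gstar η ≤ Wrisk φ c g η) :
    (∀ y y' : Fin K, 0 < gstar y → 0 < gstar y' → y = y') ∧
    ¬ (∃ y y' : Fin K, y ≠ y' ∧ 0 < gstar y ∧ 0 < gstar y') := by
  have main : ∀ y y' : Fin K, 0 < gstar y → 0 < gstar y' → y = y' := by
    -- first: if gstar y > 0 then η y ≥ 1 - c
    have hpos : ∀ y : Fin K, 0 < gstar y → 1 - c ≤ η y := by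
      intro y hy
      by_contra hlt
      push_neg at hlt
      -- per-coordinate minimality
      set a := c * η y with ha'
      set b := (1 - c) * (1 - η y) with hb'
      have ha : 0 ≤ a := mul_nonneg hc0.le (hη0 y)
      have hb : 0 < b := by
        apply mul_pos (by linarith)
        linarith
      have hab : a < b := by nlinarith [hη0 y]
      have hminv : ∀ w : ℝ, a * φ (gstar y) + b * φ (-(gstar y)) ≤ a * φ w + b * φ (-w) := by
        intro w
        have h := hmin (Function.update gstar y w)
        rw [Wdecomp φ c gstar η hη1, Wdecomp φ c (Function.update gstar y w) η hη1] at h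
        have hsplit : ∀ g : Fin K → ℝ,
            ∑ z, (c * η z * φ (g z) + (1 - c) * (1 - η z) * φ (-(g z)))
            = (c * η y * φ (g y) + (1 - c) * (1 - η y) * φ (-(g y)))
              + ∑ z ∈ Finset.univ.erase y,
                (c * η z * φ (g z) + (1 - c) * (1 - η z) * φ (-(g z))) := by
          intro g
          exact (Finset.add_sum_erase _ _ (Finset.mem_univ y)).symm
        rw [hsplit gstar, hsplit (Function.update gstar y w)] at h
        have heq : ∑ z ∈ Finset.univ.erase y,
            (c * η z * φ (Function.update gstar y w z)
              + (1 - c) * (1 - η z) * φ (-(Function.update gstar y w z)))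
            = ∑ z ∈ Finset.univ.erase y,
            (c * η z * φ (gstar z) + (1 - c) * (1 - η z) * φ (-(gstar z))) := by
          apply Finset.sum_congr rfl
          intro z hz
          rw [Function.update_of_ne (Finset.ne_of_mem_erase hz)]
        rw [heq, Function.update_self] at h
        rw [ha', hb']
        linarith
      exact coord_key φ hφ a b (gstar y) ha hb hab hy hminv
    intro y y' hy hy'
    by_contra hne
    have h1 := hpos y hy
    have h2 := hpos y' hy'
    have hsum : η y + η y' ≤ 1 := by
      have : ∑ z ∈ ({y, y'} : Finset (Fin K)), η z ≤ ∑ z, η z :=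
        Finset.sum_le_sum_of_subset_of_nonneg (Finset.subset_univ _)
          (fun z _ _ => hη0 z)
      rw [Finset.sum_pair hne, hη1] at this
      exact this
    linarith
  refine ⟨main, ?_⟩
  rintro ⟨y, y', hne, hy, hy'⟩
  exact hne (main y y' hy hy')
end

section
/- For every integer K ≥ 1, every c ∈ (0, 1/2), and every probability vector η ∈ ℝ^K (η_y ≥ 0 for all y and ∑_{y=1}^K η_y = 1), the identity ∑_{y=1}^K min(c·η_y, (1−c)·(1−η_y)) = min(c, 1 − max_y η_y) holds. -/
/-- For every probability vector `η` in `ℝ^K` and `c ∈ (0, 1/2)`: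
`∑_y min(c·η_y, (1−c)(1−η_y)) = min(c, 1 − max_y η_y)`. -/
theorem stmt11 (K : ℕ) (hK : 1 ≤ K) (c : ℝ) (hc0 : 0 < c) (hc : c < 1/2)
    (η : Fin K → ℝ) (hη0 : ∀ y, 0 ≤ η y) (hη1 : ∑ y, η y = 1) :
    ∑ y, min (c * η y) ((1 - c) * (1 - η y)) = min c (1 - vmax (by omega) η) := by
  by_cases h : ∀ y, η y ≤ 1 - c
  · have hsum : ∑ y, min (c * η y) ((1 - c) * (1 - η y)) = ∑ y, c * η y := by
      apply Finset.sum_congr rfl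
      intro y _
      exact min_eq_left (by nlinarith [h y])
    rw [hsum, ← Finset.mul_sum, hη1, mul_one]
    have hmax : vmax (by omega) η ≤ 1 - c := Finset.sup'_le _ _ fun y _ => h y
    exact (min_eq_left (by linarith)).symm
  · push_neg at h
    obtain ⟨y₀, hy₀⟩ := h
    have hother : ∀ y, y ≠ y₀ → η y ≤ 1 - η y₀ := by
      intro y hy
      have : η y₀ + η y ≤ ∑ z, η z := by
        have := Finset.add_sum_erase Finset.univ η (Finset.mem_univ y₀)
        rw [← this]
        have hy' : y ∈ Finset.univ.erase y₀ := Finset.mem_erase.mpr ⟨hy, Finset.mem_univ y⟩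
        have := Finset.single_le_sum (f := η) (fun z _ => hη0 z) hy'
        linarith
      linarith [hη1 ▸ this]
    have h1 : 1 - η y₀ < c := by linarith
    have hsplit := Fintype.sum_eq_add_sum_compl y₀
      (fun y => min (c * η y) ((1 - c) * (1 - η y)))
    rw [hsplit]
    have ht0 : min (c * η y₀) ((1 - c) * (1 - η y₀)) = (1 - c) * (1 - η y₀) :=
      min_eq_right (by nlinarith)
    have htc : ∑ y ∈ {y₀}ᶜ, min (c * η y) ((1 - c) * (1 - η y)) = ∑ y ∈ {y₀}ᶜ, c * η y := by
      apply Finset.sum_congr rfl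
      intro y hy
      have hyne : y ≠ y₀ := by simpa using hy
      have := hother y hyne
      exact min_eq_left (by nlinarith)
    have hcs : ∑ y ∈ ({y₀}ᶜ : Finset (Fin K)), η y = 1 - η y₀ := by
      have := Fintype.sum_eq_add_sum_compl y₀ η
      linarith [hη1 ▸ this.symm]
    rw [ht0, htc, ← Finset.mul_sum, hcs]
    have hmax : vmax (by omega) η = η y₀ := by
      apply le_antisymm
      · apply Finset.sup'_le
        intro y _
        by_cases hy : y = y₀
        · rw [hy]
        · linarith [hother y hy]
      · exact Finset.le_sup' η (Finset.mem_univ y₀)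
    rw [hmax, min_eq_right (by linarith)]
    ring
end

section
/- (Cost-sensitive hinge conditional regret bound, ψ equals identity for the hinge loss.) Let c ∈ (0, 1/2) and η ∈ [0,1]. Define the conditional cost-sensitive zero-one risk A(v) = c·η·1[v ≤ 0] + (1−c)·(1−η)·1[v > 0] and the conditional cost-sensitive hinge risk B(v) = c·η·max(0, 1 − v) + (1−c)·(1−η)·max(0, 1 + v) for v ∈ ℝ. Then inf_{u ∈ ℝ} A(u) = min(c·η, (1−c)·(1−η)), inf_{u ∈ ℝ} B(u) = 2·min(c·η, (1−c)·(1−η)), and for every v ∈ ℝ: A(v) − inf_{u ∈ ℝ} A(u) ≤ B(v) − inf_{u ∈ ℝ} B(u). -/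
/-- (Cost-sensitive hinge conditional regret bound; ψ is the identity for the hinge
loss.) With `A(v) = c·η·1[v ≤ 0] + (1−c)·(1−η)·1[v > 0]` the conditional
cost-sensitive zero-one risk and `B(v) = c·η·max(0, 1−v) + (1−c)·(1−η)·max(0, 1+v)`
the conditional cost-sensitive hinge risk: `inf A = min(c·η, (1−c)(1−η))`,
`inf B = 2·min(c·η, (1−c)(1−η))`, and the zero-one regret is bounded by the hinge
regret pointwise. -/
theorem stmt16 (c : ℝ) (hc0 : 0 < c) (hc : c < 1/2) (η : ℝ) (hη0 : 0 ≤ η) (hη1 : η ≤ 1) :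
    let A : ℝ → ℝ := fun v =>
      c * η * (if v ≤ 0 then 1 else 0) + (1 - c) * (1 - η) * (if 0 < v then 1 else 0)
    let B : ℝ → ℝ := fun v =>
      c * η * max 0 (1 - v) + (1 - c) * (1 - η) * max 0 (1 + v)
    sInf (Set.range A) = min (c * η) ((1 - c) * (1 - η)) ∧
    sInf (Set.range B) = 2 * min (c * η) ((1 - c) * (1 - η)) ∧
    ∀ v : ℝ, A v - sInf (Set.range A) ≤ B v - sInf (Set.range B) := by
  intro A B
  set a := c * η with ha'
  set b := (1 - c) * (1 - η) with hb'
  have ha : 0 ≤ a := mul_nonneg hc0.le hη0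
  have hb : 0 ≤ b := mul_nonneg (by linarith) (by linarith)
  -- A values
  have hAval : ∀ v : ℝ, A v = if v ≤ 0 then a else b := by
    intro v
    by_cases h : v ≤ 0
    · simp [A, h, not_lt.mpr h, ha']
    · simp [A, h, not_le.mp h, hb']
  have hAlb : ∀ x ∈ Set.range A, min a b ≤ x := by
    rintro x ⟨v, rfl⟩
    rw [hAval]
    split
    · exact min_le_left a b
    · exact min_le_right a b
  have hAmem : min a b ∈ Set.range A := by
    rcases le_total a b with h | h
    · exact ⟨0, by rw [hAval]; simp [min_eq_left h]⟩
    · exact ⟨1, by rw [hAval]; simp [min_eq_right h]⟩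
  have hA : sInf (Set.range A) = min a b :=
    le_antisymm (csInf_le ⟨min a b, hAlb⟩ hAmem) (le_csInf ⟨_, hAmem⟩ hAlb)
  have key : ∀ v : ℝ, 2 * min a b ≤ B v := by
    intro v
    have hp : (1 : ℝ) - v ≤ max 0 (1 - v) := le_max_right _ _
    have hq : (1 : ℝ) + v ≤ max 0 (1 + v) := le_max_right _ _
    have hp0 : (0:ℝ) ≤ max 0 (1 - v) := le_max_left _ _
    have hq0 : (0:ℝ) ≤ max 0 (1 + v) := le_max_left _ _
    show 2 * min a b ≤ a * max 0 (1 - v) + b * max 0 (1 + v)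
    rcases le_total a b with h | h
    · rw [min_eq_left h]; nlinarith
    · rw [min_eq_right h]; nlinarith
  have hBlb : ∀ x ∈ Set.range B, 2 * min a b ≤ x := by
    rintro x ⟨v, rfl⟩; exact key v
  have hBmem : 2 * min a b ∈ Set.range B := by
    rcases le_total a b with h | h
    · refine ⟨-1, ?_⟩
      show a * max 0 (1 - (-1)) + b * max 0 (1 + (-1)) = 2 * min a b
      rw [min_eq_left h]; norm_num; ring
    · refine ⟨1, ?_⟩
      show a * max 0 (1 - 1) + b * max 0 (1 + 1) = 2 * min a b
      rw [min_eq_right h]; norm_num; ring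
  have hB : sInf (Set.range B) = 2 * min a b :=
    le_antisymm (csInf_le ⟨2 * min a b, hBlb⟩ hBmem) (le_csInf ⟨_, hBmem⟩ hBlb)
  refine ⟨hA, hB, ?_⟩
  intro v
  rw [hA, hB]
  have hp : (1 : ℝ) - v ≤ max 0 (1 - v) := le_max_right _ _
  have hq : (1 : ℝ) + v ≤ max 0 (1 + v) := le_max_right _ _
  have hp0 : (0:ℝ) ≤ max 0 (1 - v) := le_max_left _ _
  have hq0 : (0:ℝ) ≤ max 0 (1 + v) := le_max_left _ _
  have hBv : B v = a * max 0 (1 - v) + b * max 0 (1 + v) := rfl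
  rw [hAval, hBv]
  by_cases hv : v ≤ 0
  · simp only [hv, if_true]
    have hp1 : (1:ℝ) ≤ max 0 (1 - v) := le_trans (by linarith) hp
    rcases le_total a b with h | h
    · rw [min_eq_left h]
      rcases le_total v (-1) with h1 | h1
      · nlinarith
      · nlinarith
    · rw [min_eq_right h]; nlinarith
  · simp only [hv, if_false]
    push_neg at hv
    have hq1 : (1:ℝ) ≤ max 0 (1 + v) := le_trans (by linarith) hq
    rcases le_total a b with h | h
    · rw [min_eq_left h]; nlinarith
    · rw [min_eq_right h]
      rcases le_total 1 v with h1 | h1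
      · nlinarith
      · nlinarith
end

section
/- The sigmoid loss φ(z) = 1/(1 + e^z) is classification-calibrated: for every η ∈ [0,1] with η ≠ 1/2, inf{η·φ(v) + (1−η)·φ(−v) : v ∈ ℝ, v·(2η−1) ≤ 0} > inf{η·φ(v) + (1−η)·φ(−v) : v ∈ ℝ}. Concretely, for η > 1/2 the unrestricted infimum is 1 − η while the infimum over v ≤ 0 is 1/2, and symmetrically for η < 1/2. -/
/-- The sigmoid loss `φ(z) = 1 / (1 + e^z)`. -/
noncomputable def sigmoidLoss (z : ℝ) : ℝ := 1 / (1 + Real.exp z)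

lemma sig_pos (v : ℝ) : 0 < sigmoidLoss v := by
  unfold sigmoidLoss; positivity

lemma sig_lt_one (v : ℝ) : sigmoidLoss v < 1 := by
  unfold sigmoidLoss
  rw [div_lt_one (by positivity)]
  linarith [Real.exp_pos v]

lemma sig_neg (v : ℝ) : sigmoidLoss (-v) = 1 - sigmoidLoss v := by
  unfold sigmoidLoss
  have h3 : Real.exp v ≠ 0 := (Real.exp_pos v).ne'
  have h1 : (0:ℝ) < 1 + Real.exp v := by positivity
  rw [Real.exp_neg]
  field_simp
  ring

lemma sig_zero : sigmoidLoss 0 = 1/2 := by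
  unfold sigmoidLoss; rw [Real.exp_zero]; norm_num

lemma sig_half_of_nonpos {v : ℝ} (h : v ≤ 0) : 1/2 ≤ sigmoidLoss v := by
  unfold sigmoidLoss
  rw [le_div_iff₀ (by positivity)]
  have := Real.exp_le_one_iff.mpr h
  linarith

lemma sig_half_of_nonneg {v : ℝ} (h : 0 ≤ v) : sigmoidLoss v ≤ 1/2 := by
  have := sig_half_of_nonpos (neg_nonpos_of_nonneg h)
  rw [sig_neg] at this
  linarith

lemma sig_small {δ : ℝ} (hδ : 0 < δ) : ∃ v, sigmoidLoss v < δ := by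
  refine ⟨Real.log (1/δ), ?_⟩
  unfold sigmoidLoss
  rw [Real.exp_log (by positivity)]
  rw [div_lt_iff₀ (by positivity)]
  have : δ * (1 + 1/δ) = δ + 1 := by field_simp
  rw [this]; linarith

lemma sig_large {δ : ℝ} (hδ : 0 < δ) : ∃ v, 1 - δ < sigmoidLoss v := by
  obtain ⟨v, hv⟩ := sig_small hδ
  exact ⟨-v, by rw [sig_neg]; linarith⟩

lemma sInf_unc_pos (c d : ℝ) (hd : 0 < d) :
    sInf {r : ℝ | ∃ v, r = c + d * sigmoidLoss v} = c := by
  have hne : {r : ℝ | ∃ v, r = c + d * sigmoidLoss v}.Nonempty := ⟨_, 0, rfl⟩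
  have hbb : BddBelow {r : ℝ | ∃ v, r = c + d * sigmoidLoss v} := by
    refine ⟨c, ?_⟩
    rintro r ⟨v, rfl⟩
    nlinarith [sig_pos v]
  apply le_antisymm
  · rw [Real.sInf_le_iff hbb hne]
    intro ε hε
    obtain ⟨v, hv⟩ := sig_small (div_pos hε hd)
    refine ⟨c + d * sigmoidLoss v, ⟨v, rfl⟩, ?_⟩
    have key : ε / d * d = ε := div_mul_cancel₀ ε hd.ne'
    nlinarith [mul_lt_mul_of_pos_right hv hd]
  · apply le_csInf hne
    rintro r ⟨v, rfl⟩
    nlinarith [sig_pos v]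

lemma sInf_unc_neg (c d : ℝ) (hd : d < 0) :
    sInf {r : ℝ | ∃ v, r = c + d * sigmoidLoss v} = c + d := by
  have hd' : 0 < -d := neg_pos.mpr hd
  have hne : {r : ℝ | ∃ v, r = c + d * sigmoidLoss v}.Nonempty := ⟨_, 0, rfl⟩
  have hbb : BddBelow {r : ℝ | ∃ v, r = c + d * sigmoidLoss v} := by
    refine ⟨c + d, ?_⟩
    rintro r ⟨v, rfl⟩
    nlinarith [sig_lt_one v]
  apply le_antisymm
  · rw [Real.sInf_le_iff hbb hne]
    intro ε hε
    obtain ⟨v, hv⟩ := sig_large (div_pos hε hd')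
    refine ⟨c + d * sigmoidLoss v, ⟨v, rfl⟩, ?_⟩
    have key : ε / (-d) * (-d) = ε := div_mul_cancel₀ ε hd'.ne'
    nlinarith [mul_lt_mul_of_pos_right hv hd']
  · apply le_csInf hne
    rintro r ⟨v, rfl⟩
    nlinarith [sig_lt_one v]

lemma sInf_con_pos (c d : ℝ) (hd : 0 < d) :
    sInf {r : ℝ | ∃ v, v ≤ 0 ∧ r = c + d * sigmoidLoss v} = c + d/2 := by
  have hbb : BddBelow {r : ℝ | ∃ v, v ≤ 0 ∧ r = c + d * sigmoidLoss v} := by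
    refine ⟨c + d/2, ?_⟩
    rintro r ⟨v, hv, rfl⟩
    nlinarith [sig_half_of_nonpos hv]
  have hmem : c + d/2 ∈ {r : ℝ | ∃ v, v ≤ 0 ∧ r = c + d * sigmoidLoss v} :=
    ⟨0, le_refl 0, by rw [sig_zero]; ring⟩
  apply le_antisymm (csInf_le hbb hmem)
  apply le_csInf ⟨_, hmem⟩
  rintro r ⟨v, hv, rfl⟩
  nlinarith [sig_half_of_nonpos hv]

lemma sInf_con_neg (c d : ℝ) (hd : d < 0) :
    sInf {r : ℝ | ∃ v, 0 ≤ v ∧ r = c + d * sigmoidLoss v} = c + d/2 := by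
  have hbb : BddBelow {r : ℝ | ∃ v, 0 ≤ v ∧ r = c + d * sigmoidLoss v} := by
    refine ⟨c + d/2, ?_⟩
    rintro r ⟨v, hv, rfl⟩
    nlinarith [sig_half_of_nonneg hv]
  have hmem : c + d/2 ∈ {r : ℝ | ∃ v, 0 ≤ v ∧ r = c + d * sigmoidLoss v} :=
    ⟨0, le_refl 0, by rw [sig_zero]; ring⟩
  apply le_antisymm (csInf_le hbb hmem)
  apply le_csInf ⟨_, hmem⟩
  rintro r ⟨v, hv, rfl⟩
  nlinarith [sig_half_of_nonneg hv]

lemma risk_eq (η v : ℝ) :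
    η * sigmoidLoss v + (1 - η) * sigmoidLoss (-v) = (1 - η) + (2*η - 1) * sigmoidLoss v := by
  rw [sig_neg]; ring

lemma part_high (η : ℝ) (h1 : 1/2 < η) :
    sInf {r : ℝ | ∃ v : ℝ, r = η * sigmoidLoss v + (1 - η) * sigmoidLoss (-v)} =
      1 - η ∧
    sInf {r : ℝ | ∃ v : ℝ, v * (2 * η - 1) ≤ 0 ∧
        r = η * sigmoidLoss v + (1 - η) * sigmoidLoss (-v)} = 1/2 := by
  have hd : 0 < 2*η - 1 := by linarith
  have e1 : {r : ℝ | ∃ v : ℝ, r = η * sigmoidLoss v + (1 - η) * sigmoidLoss (-v)} =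
      {r : ℝ | ∃ v, r = (1 - η) + (2*η - 1) * sigmoidLoss v} := by
    ext r; simp only [Set.mem_setOf_eq, risk_eq]
  have e2 : {r : ℝ | ∃ v : ℝ, v * (2 * η - 1) ≤ 0 ∧
        r = η * sigmoidLoss v + (1 - η) * sigmoidLoss (-v)} =
      {r : ℝ | ∃ v, v ≤ 0 ∧ r = (1 - η) + (2*η - 1) * sigmoidLoss v} := by
    ext r
    simp only [Set.mem_setOf_eq, risk_eq]
    constructor
    · rintro ⟨v, hv, rfl⟩
      exact ⟨v, by nlinarith, rfl⟩
    · rintro ⟨v, hv, rfl⟩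
      exact ⟨v, by nlinarith, rfl⟩
  constructor
  · rw [e1, sInf_unc_pos _ _ hd]
  · rw [e2, sInf_con_pos _ _ hd]; ring

lemma part_low (η : ℝ) (h1 : η < 1/2) :
    sInf {r : ℝ | ∃ v : ℝ, r = η * sigmoidLoss v + (1 - η) * sigmoidLoss (-v)} =
      η ∧
    sInf {r : ℝ | ∃ v : ℝ, v * (2 * η - 1) ≤ 0 ∧
        r = η * sigmoidLoss v + (1 - η) * sigmoidLoss (-v)} = 1/2 := by
  have hd : 2*η - 1 < 0 := by linarith
  have e1 : {r : ℝ | ∃ v : ℝ, r = η * sigmoidLoss v + (1 - η) * sigmoidLoss (-v)} =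
      {r : ℝ | ∃ v, r = (1 - η) + (2*η - 1) * sigmoidLoss v} := by
    ext r; simp only [Set.mem_setOf_eq, risk_eq]
  have e2 : {r : ℝ | ∃ v : ℝ, v * (2 * η - 1) ≤ 0 ∧
        r = η * sigmoidLoss v + (1 - η) * sigmoidLoss (-v)} =
      {r : ℝ | ∃ v, 0 ≤ v ∧ r = (1 - η) + (2*η - 1) * sigmoidLoss v} := by
    ext r
    simp only [Set.mem_setOf_eq, risk_eq]
    constructor
    · rintro ⟨v, hv, rfl⟩
      exact ⟨v, by nlinarith, rfl⟩
    · rintro ⟨v, hv, rfl⟩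
      exact ⟨v, by nlinarith, rfl⟩
  constructor
  · rw [e1, sInf_unc_neg _ _ hd]; ring
  · rw [e2, sInf_con_neg _ _ hd]; ring

/-- The sigmoid loss is classification-calibrated; concretely, for `η > 1/2` the
unrestricted infimum of the conditional sigmoid risk is `1 − η` while the infimum
over the constrained region (`v ≤ 0`) is `1/2`, and symmetrically for `η < 1/2`. -/
theorem stmt18 :
    ClassificationCalibrated sigmoidLoss ∧
    (∀ η : ℝ, 1/2 < η → η ≤ 1 →
      sInf {r : ℝ | ∃ v : ℝ, r = η * sigmoidLoss v + (1 - η) * sigmoidLoss (-v)} =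
        1 - η ∧
      sInf {r : ℝ | ∃ v : ℝ, v * (2 * η - 1) ≤ 0 ∧
          r = η * sigmoidLoss v + (1 - η) * sigmoidLoss (-v)} = 1/2) ∧
    (∀ η : ℝ, 0 ≤ η → η < 1/2 →
      sInf {r : ℝ | ∃ v : ℝ, r = η * sigmoidLoss v + (1 - η) * sigmoidLoss (-v)} =
        η ∧
      sInf {r : ℝ | ∃ v : ℝ, v * (2 * η - 1) ≤ 0 ∧
          r = η * sigmoidLoss v + (1 - η) * sigmoidLoss (-v)} = 1/2) := by
  refine ⟨?_, fun η h1 _ => part_high η h1, fun η _ h1 => part_low η h1⟩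
  intro η _ _ hne
  rcases lt_or_gt_of_ne hne with h | h
  · obtain ⟨hu, hc⟩ := part_low η h
    rw [hu, hc]; linarith
  · obtain ⟨hu, hc⟩ := part_high η h
    rw [hu, hc]; linarith
end
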